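/- For every n ≥ 0, the golden tree G_n has exactly n nodes, is a weight-biased leftist tree (at every node the weight of the left subtree is at least the weight of the right subtree), and is a rank-biased leftist tree (at every node the rank of the left subtree is at least the rank of the right subtree); moreover n ↦ rank(G_n) is nondecreasing. -/

import Mathlib

inductive UTree : Type
  | nil : UTree
  | node : UTree → UTree → UTree

namespace UTree

def size : UTree → ℕ
  | nil => 0
  | node t u => size t + size u + 1

def rank : UTree → ℕ
  | nil => 0
  | node _ u => rank u + 1

def WeightLeftist : UTree → Prop
  | nil => True
  | node t u => size u ≤ size t ∧ WeightLeftist t ∧ WeightLeftist u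

def RankLeftist : UTree → Prop
  | nil => True
  | node t u => rank u ≤ rank t ∧ RankLeftist t ∧ RankLeftist u

/-- unlabeled merge -/
def umerge : UTree → UTree → UTree
  | node t u, y => node (umerge y u) t
  | nil, node t u => node (umerge nil u) t
  | nil, nil => nil
termination_by x y => size x + size y
decreasing_by all_goals (simp [size]; try omega)

end UTree

/-- Hofstadter's G-sequence, packaged with the invariant `L n ≤ n`. -/
noncomputable def hofstadterL' : (n : ℕ) → {m : ℕ // m ≤ n} := fun n =>
  Nat.strongRecOn n (fun n ih =>
    match n, ih with
    | 0, _ => ⟨0, Nat.le_refl 0⟩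
    | n + 1, ih =>
      let a := ih n (Nat.lt_succ_self n)
      let b := ih a.1 (Nat.lt_succ_of_le a.2)
      ⟨n + 1 - b.1, Nat.sub_le _ _⟩)

/-- Hofstadter's G-sequence: L(0) = 0 and L(n) = n - L(L(n-1)). -/
noncomputable def hL (n : ℕ) : ℕ := (hofstadterL' n).1

noncomputable def hR (n : ℕ) : ℕ := n - hL n

/-- the golden tree of order n -/
noncomputable def golden : ℕ → UTree
  | 0 => UTree.nil
  | n + 1 => UTree.node (golden (hL n)) (golden (hR n))
termination_by n => n
decreasing_by
  · exact Nat.lt_succ_of_le (hofstadterL' n).2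
  · simp only [hR]; omega

theorem hL_zero : hL 0 = 0 := by
  simp only [hL, hofstadterL', Nat.strongRecOn]
  rw [WellFounded.fix_eq]

theorem hL_succ (n : ℕ) : hL (n+1) = n + 1 - hL (hL n) := by
  simp only [hL, hofstadterL', Nat.strongRecOn]
  rw [WellFounded.fix_eq]

theorem hL_le (n : ℕ) : hL n ≤ n := (hofstadterL' n).2

theorem hL_step : ∀ n : ℕ, hL n ≤ hL (n+1) ∧ hL (n+1) ≤ hL n + 1 := by
  intro n
  induction n using Nat.strong_induction_on with
  | _ n ih =>
    match n with
    | 0 => simp [hL_zero, hL_succ]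
    | (m+1) =>
      have h1 := hL_succ m
      have h2 := hL_succ (m+1)
      have hs := ih m (Nat.lt_succ_self m)
      have hlem : hL m ≤ m := hL_le m
      rcases Nat.lt_or_ge (hL m) (hL (m+1)) with h | h
      · -- hL (m+1) = hL m + 1
        have heq : hL (m+1) = hL m + 1 := by omega
        have hs2 := ih (hL m) (by omega)
        have h3 : hL (hL m) ≤ hL (hL m + 1) ∧ hL (hL m + 1) ≤ hL (hL m) + 1 := hs2
        have h4 : hL (hL (m+1)) = hL (hL m + 1) := by rw [heq]
        have h5 : hL (hL m) ≤ hL m := hL_le _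
        omega
      · have heq : hL (m+1) = hL m := by omega
        have h4 : hL (hL (m+1)) = hL (hL m) := by rw [heq]
        have h5 : hL (hL m) ≤ hL m := hL_le _
        omega

theorem hL_mono : Monotone hL :=
  monotone_nat_of_le_succ fun n => (hL_step n).1

theorem hR_le_hL (n : ℕ) : hR n ≤ hL n := by
  match n with
  | 0 => simp [hR, hL_zero]
  | (m+1) =>
    have h1 := hL_succ m
    have h2 : hL (hL m) ≤ hL (m+1) := hL_mono (le_trans (hL_le m) (Nat.le_succ m))
    have h3 : hL (hL m) ≤ hL m := hL_le _
    have h4 : hL m ≤ m := hL_le m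
    simp only [hR]
    omega

theorem hR_mono : Monotone hR := by
  apply monotone_nat_of_le_succ
  intro n
  have := hL_step n
  have := hL_le n
  simp only [hR]
  omega

theorem golden_zero : golden 0 = UTree.nil := by rw [golden]
theorem golden_succ (n : ℕ) : golden (n+1) = UTree.node (golden (hL n)) (golden (hR n)) := by
  rw [golden]

theorem hR_le (n : ℕ) : hR n ≤ n := Nat.sub_le _ _

theorem golden_size : ∀ n : ℕ, UTree.size (golden n) = n := by
  intro n
  induction n using Nat.strong_induction_on with
  | _ n ih =>
    match n with
    | 0 => simp [golden_zero, UTree.size]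
    | (m+1) =>
      rw [golden_succ]
      have h1 := hL_le m
      have h2 := hR_le m
      rw [UTree.size, ih (hL m) (by omega), ih (hR m) (by omega)]
      simp only [hR]
      omega

theorem golden_rank_step : ∀ n : ℕ, UTree.rank (golden n) ≤ UTree.rank (golden (n+1)) := by
  have key : ∀ n : ℕ, ∀ m < n, UTree.rank (golden m) ≤ UTree.rank (golden (m+1)) := by
    intro n
    induction n using Nat.strong_induction_on with
    | _ n ih =>
      intro m hm
      match m with
      | 0 => simp [golden_zero, UTree.rank]
      | (k+1) =>
        rw [golden_succ k, golden_succ (k+1)]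
        simp only [UTree.rank]
        have hmono : hR k ≤ hR (k+1) := hR_mono (Nat.le_succ k)
        have hle : hR (k+1) ≤ k+1 := hR_le _
        -- chain from hR k to hR (k+1)
        have chain : ∀ j, hR k + j ≤ hR (k+1) →
            UTree.rank (golden (hR k)) ≤ UTree.rank (golden (hR k + j)) := by
          intro j
          induction j with
          | zero => intro _; simp
          | succ i ihj =>
            intro hj
            have h1 := ihj (by omega)
            have h2 : UTree.rank (golden (hR k + i)) ≤ UTree.rank (golden (hR k + i + 1)) :=
              ih (k+1) hm (hR k + i) (by omega)
            have heq2 : hR k + (i+1) = hR k + i + 1 := by omega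
            rw [heq2]
            omega
        have := chain (hR (k+1) - hR k) (by omega)
        have heq : hR k + (hR (k+1) - hR k) = hR (k+1) := by omega
        rw [heq] at this
        omega
  exact fun n => key (n+1) n (Nat.lt_succ_self n)

theorem golden_rank_mono : Monotone (fun n => UTree.rank (golden n)) :=
  monotone_nat_of_le_succ golden_rank_step

theorem golden_all : ∀ n : ℕ, UTree.WeightLeftist (golden n) ∧ UTree.RankLeftist (golden n) := by
  intro n
  induction n using Nat.strong_induction_on with
  | _ n ih =>
    match n with
    | 0 => simp [golden_zero, UTree.WeightLeftist, UTree.RankLeftist]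
    | (m+1) =>
      rw [golden_succ]
      have h1 := hL_le m
      have h2 := hR_le m
      have hrl := hR_le_hL m
      obtain ⟨wL, rL⟩ := ih (hL m) (by omega)
      obtain ⟨wR, rR⟩ := ih (hR m) (by omega)
      refine ⟨⟨?_, wL, wR⟩, ⟨?_, rL, rR⟩⟩
      · rw [golden_size, golden_size]; exact hrl
      · exact golden_rank_mono hrl


/-- For every n, the golden tree G_n has exactly n nodes and is a weight-biased and a
rank-biased leftist tree; moreover n ↦ rank(G_n) is nondecreasing. -/
theorem golden_tree_leftist :
    (∀ n : ℕ, UTree.size (golden n) = n ∧ UTree.WeightLeftist (golden n) ∧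
      UTree.RankLeftist (golden n)) ∧
    Monotone (fun n => UTree.rank (golden n)) := by
  exact ⟨fun n => ⟨golden_size n, (golden_all n).1, (golden_all n).2⟩, golden_rank_mono⟩
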